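/- Fix n, t, s ∈ ℕ, Hermitian quaternion matrices Q, D_1, …, D_t, F_1, …, F_s ∈ ℍ^{(n+1)×(n+1)}, let E ∈ ℍ^{(n+1)×(n+1)} be the matrix with a 1 in the top-left entry and zeros elsewhere, and let λ ∈ ℝ. Then the following are equivalent: (1) there exist a Hermitian quaternion-PSD matrix G ∈ ℍ^{(n+1)×(n+1)} and reals m_1, …, m_t ≥ 0, ℓ_1, …, ℓ_s ∈ ℝ with Q − λ·E = G + Σ_{i=1}^t m_i·D_i + Σ_{j=1}^s ℓ_j·F_j; (2) there exist a real symmetric positive semidefinite 4(n+1)×4(n+1) matrix X and reals a_1, …, a_t ≥ 0, b_1, …, b_s ∈ ℝ with Λ(Q) − λ·Λ(E) = X + Σ_{i=1}^t a_i·Λ(D_i) + Σ_{j=1}^s b_j·Λ(F_j). Moreover, the correspondence is given by X = Λ(G), a_i = m_i, b_j = ℓ_j. -/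

import Mathlib

open Matrix

noncomputable def lambdaMat {N : ℕ} (H : Matrix (Fin N) (Fin N) (Quaternion ℝ)) :
    Matrix (Fin 4 × Fin N) (Fin 4 × Fin N) ℝ := fun p q =>
  ![![(H p.2 q.2).re, -(H p.2 q.2).imI, -(H p.2 q.2).imJ, -(H p.2 q.2).imK],
    ![(H p.2 q.2).imI, (H p.2 q.2).re, -(H p.2 q.2).imK, (H p.2 q.2).imJ],
    ![(H p.2 q.2).imJ, (H p.2 q.2).imK, (H p.2 q.2).re, -(H p.2 q.2).imI],
    ![(H p.2 q.2).imK, -(H p.2 q.2).imJ, (H p.2 q.2).imI, (H p.2 q.2).re]] p.1 q.1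

lemma lambdaMat_add {N : ℕ} (A B : Matrix (Fin N) (Fin N) (Quaternion ℝ)) :
    lambdaMat (A + B) = lambdaMat A + lambdaMat B := by
  ext ⟨i, k⟩ ⟨j, l⟩
  fin_cases i <;> fin_cases j <;>
    simp [lambdaMat, Matrix.add_apply] <;> ring

lemma lambdaMat_smul {N : ℕ} (r : ℝ) (A : Matrix (Fin N) (Fin N) (Quaternion ℝ)) :
    lambdaMat (r • A) = r • lambdaMat A := by
  ext ⟨i, k⟩ ⟨j, l⟩
  fin_cases i <;> fin_cases j <;>
    simp [lambdaMat, Matrix.smul_apply, Quaternion.re_smul, Quaternion.imI_smul,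
      Quaternion.imJ_smul, Quaternion.imK_smul, smul_eq_mul] <;> ring

noncomputable def lambdaLin {N : ℕ} :
    Matrix (Fin N) (Fin N) (Quaternion ℝ) →ₗ[ℝ] Matrix (Fin 4 × Fin N) (Fin 4 × Fin N) ℝ where
  toFun := lambdaMat
  map_add' := lambdaMat_add
  map_smul' := lambdaMat_smul

lemma lambdaMat_sub {N : ℕ} (A B : Matrix (Fin N) (Fin N) (Quaternion ℝ)) :
    lambdaMat (A - B) = lambdaMat A - lambdaMat B :=
  map_sub (lambdaLin (N := N)) A B

lemma lambdaMat_sum {N : ℕ} {α : Type*} (s : Finset α)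
    (f : α → Matrix (Fin N) (Fin N) (Quaternion ℝ)) :
    lambdaMat (∑ x ∈ s, f x) = ∑ x ∈ s, lambdaMat (f x) :=
  map_sum (lambdaLin (N := N)) f s

lemma re_sum {α : Type*} (s : Finset α) (f : α → Quaternion ℝ) :
    (∑ x ∈ s, f x).re = ∑ x ∈ s, (f x).re :=
  map_sum (QuaternionAlgebra.reₗ (R := ℝ) (c₁ := -1) (c₂ := 0) (c₃ := -1)) f s

lemma lambdaMat_isHermitian {N : ℕ} (A : Matrix (Fin N) (Fin N) (Quaternion ℝ))
    (hA : A = Aᴴ) : (lambdaMat A).IsHermitian := by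
  ext ⟨i, k⟩ ⟨j, l⟩
  have h : A k l = star (A l k) := by
    conv_lhs => rw [hA]
    rfl
  fin_cases i <;> fin_cases j <;>
    simp [lambdaMat, Matrix.conjTranspose_apply, h]

/-- coefficient vector of a quaternion vector -/
noncomputable def wv {N : ℕ} (v : Fin N → Quaternion ℝ) : Fin 4 × Fin N → ℝ :=
  fun p => ![(v p.2).re, (v p.2).imI, (v p.2).imJ, (v p.2).imK] p.1

lemma wv_surjective {N : ℕ} (x : Fin 4 × Fin N → ℝ) :
    ∃ v : Fin N → Quaternion ℝ, wv v = x := by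
  refine ⟨fun k => ⟨x (0, k), x (1, k), x (2, k), x (3, k)⟩, ?_⟩
  ext ⟨i, k⟩
  fin_cases i <;> rfl

lemma sum4_comm {ι : Type*} [Fintype ι] (f : Fin 4 → ι → Fin 4 → ι → ℝ) :
    ∑ i, ∑ k, ∑ j, ∑ l, f i k j l = ∑ k, ∑ l, ∑ i, ∑ j, f i k j l := by
  rw [Finset.sum_comm]
  refine Finset.sum_congr rfl fun k _ => ?_
  rw [show (∑ i, ∑ j, ∑ l, f i k j l) = ∑ i, ∑ l, ∑ j, f i k j l from
    Finset.sum_congr rfl fun i _ => Finset.sum_comm]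
  exact Finset.sum_comm

lemma key_quad {N : ℕ} (G : Matrix (Fin N) (Fin N) (Quaternion ℝ)) (v : Fin N → Quaternion ℝ) :
    wv v ⬝ᵥ lambdaMat G *ᵥ wv v = (∑ k, ∑ l, star (v k) * G k l * v l).re := by
  have entry : ∀ k l, (∑ i : Fin 4, ∑ j : Fin 4,
      wv v (i, k) * lambdaMat G (i, k) (j, l) * wv v (j, l))
      = (star (v k) * G k l * v l).re := by
    intro k l
    simp only [Fin.sum_univ_four, wv, lambdaMat]
    simp only [Quaternion.re_mul, Quaternion.imI_mul, Quaternion.imJ_mul, Quaternion.imK_mul,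
      Quaternion.re_star, Quaternion.imI_star, Quaternion.imJ_star, Quaternion.imK_star]
    simp only [Matrix.cons_val]
    norm_num
    ring
  rw [re_sum]
  rw [show (∑ k, (∑ l, star (v k) * G k l * v l).re) = ∑ k, ∑ l, (star (v k) * G k l * v l).re
    from Finset.sum_congr rfl fun k _ => re_sum _ _]
  simp only [dotProduct, mulVec, dotProduct, Fintype.sum_prod_type, Finset.mul_sum, ← mul_assoc]
  rw [sum4_comm]
  exact Finset.sum_congr rfl fun k _ => Finset.sum_congr rfl fun l _ => entry k l

lemma lambdaMat_posSemidef {N : ℕ} (G : Matrix (Fin N) (Fin N) (Quaternion ℝ))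
    (hG : G = Gᴴ)
    (hpsd : ∀ v : Fin N → Quaternion ℝ, 0 ≤ (∑ k, ∑ l, star (v k) * G k l * v l).re) :
    (lambdaMat G).PosSemidef := by
  refine Matrix.posSemidef_iff_dotProduct_mulVec.2 ⟨lambdaMat_isHermitian G hG, fun x => ?_⟩
  obtain ⟨v, rfl⟩ := wv_surjective x
  simpa [key_quad] using hpsd v

lemma quatPSD_of_lambda {N : ℕ} (G : Matrix (Fin N) (Fin N) (Quaternion ℝ))
    {X : Matrix (Fin 4 × Fin N) (Fin 4 × Fin N) ℝ} (hX : X.PosSemidef)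
    (hLG : lambdaMat G = X) :
    ∀ v : Fin N → Quaternion ℝ, 0 ≤ (∑ k, ∑ l, star (v k) * G k l * v l).re := by
  intro v
  rw [← key_quad, hLG]
  simpa using hX.dotProduct_mulVec_nonneg (wv v)

lemma E_herm {N : ℕ} (E : Matrix (Fin (N + 1)) (Fin (N + 1)) (Quaternion ℝ))
    (hE : E = Matrix.single 0 0 1) : E = Eᴴ := by
  subst hE
  refine Matrix.ext fun i j => ?_
  simp only [Matrix.conjTranspose_apply, Matrix.single, Matrix.of_apply, and_comm]
  simp [apply_ite (star : Quaternion ℝ → Quaternion ℝ)]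

lemma smul_conjTranspose' {N : ℕ} (r : ℝ) (A : Matrix (Fin N) (Fin N) (Quaternion ℝ)) :
    (r • A)ᴴ = r • Aᴴ := by
  refine Matrix.ext fun i j => ?_
  simp [Matrix.conjTranspose_apply, Quaternion.star_smul]

/-- Equivalence of the first-order QSOS relaxation of a quaternion QCQP with the
first-order SOS relaxation of its real reformulation, the correspondence being
`X = Λ(G)`, `aᵢ = mᵢ`, `bⱼ = ℓⱼ`. -/
theorem first_order_qsos_eq_rsos {n t s : ℕ}
    (Q : Matrix (Fin (n + 1)) (Fin (n + 1)) (Quaternion ℝ))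
    (D : Fin t → Matrix (Fin (n + 1)) (Fin (n + 1)) (Quaternion ℝ))
    (F : Fin s → Matrix (Fin (n + 1)) (Fin (n + 1)) (Quaternion ℝ))
    (hQ : Q = Qᴴ) (hD : ∀ i, D i = (D i)ᴴ) (hF : ∀ j, F j = (F j)ᴴ)
    (E : Matrix (Fin (n + 1)) (Fin (n + 1)) (Quaternion ℝ))
    (hE : E = Matrix.single 0 0 1)
    (lam : ℝ) :
    ((∃ (G : Matrix (Fin (n + 1)) (Fin (n + 1)) (Quaternion ℝ))
        (m : Fin t → ℝ) (ℓ : Fin s → ℝ),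
        G = Gᴴ ∧
        (∀ v : Fin (n + 1) → Quaternion ℝ,
          0 ≤ (∑ k, ∑ l, star (v k) * G k l * v l).re) ∧
        (∀ i, 0 ≤ m i) ∧
        Q - lam • E = G + ∑ i, m i • D i + ∑ j, ℓ j • F j) ↔
      (∃ (X : Matrix (Fin 4 × Fin (n + 1)) (Fin 4 × Fin (n + 1)) ℝ)
        (a : Fin t → ℝ) (b : Fin s → ℝ),
        X.PosSemidef ∧
        (∀ i, 0 ≤ a i) ∧
        lambdaMat Q - lam • lambdaMat E =
          X + ∑ i, a i • lambdaMat (D i) + ∑ j, b j • lambdaMat (F j))) ∧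
    (∀ (G : Matrix (Fin (n + 1)) (Fin (n + 1)) (Quaternion ℝ))
        (m : Fin t → ℝ) (ℓ : Fin s → ℝ),
        G = Gᴴ →
        (∀ v : Fin (n + 1) → Quaternion ℝ,
          0 ≤ (∑ k, ∑ l, star (v k) * G k l * v l).re) →
        (∀ i, 0 ≤ m i) →
        Q - lam • E = G + ∑ i, m i • D i + ∑ j, ℓ j • F j →
        ((lambdaMat G).PosSemidef ∧
          lambdaMat Q - lam • lambdaMat E =
            lambdaMat G + ∑ i, m i • lambdaMat (D i) + ∑ j, ℓ j • lambdaMat (F j))) ∧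
    (∀ (X : Matrix (Fin 4 × Fin (n + 1)) (Fin 4 × Fin (n + 1)) ℝ)
        (a : Fin t → ℝ) (b : Fin s → ℝ),
        X.PosSemidef →
        (∀ i, 0 ≤ a i) →
        lambdaMat Q - lam • lambdaMat E =
          X + ∑ i, a i • lambdaMat (D i) + ∑ j, b j • lambdaMat (F j) →
        ∃ G : Matrix (Fin (n + 1)) (Fin (n + 1)) (Quaternion ℝ),
          X = lambdaMat G ∧ G = Gᴴ ∧
          (∀ v : Fin (n + 1) → Quaternion ℝ,
            0 ≤ (∑ k, ∑ l, star (v k) * G k l * v l).re) ∧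
          Q - lam • E = G + ∑ i, a i • D i + ∑ j, b j • F j) := by
  have part2 : ∀ (G : Matrix (Fin (n + 1)) (Fin (n + 1)) (Quaternion ℝ))
      (m : Fin t → ℝ) (ℓ : Fin s → ℝ),
      G = Gᴴ →
      (∀ v : Fin (n + 1) → Quaternion ℝ,
        0 ≤ (∑ k, ∑ l, star (v k) * G k l * v l).re) →
      (∀ i, 0 ≤ m i) →
      Q - lam • E = G + ∑ i, m i • D i + ∑ j, ℓ j • F j →
      ((lambdaMat G).PosSemidef ∧
        lambdaMat Q - lam • lambdaMat E =
          lambdaMat G + ∑ i, m i • lambdaMat (D i) + ∑ j, ℓ j • lambdaMat (F j)) := by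
    intro G m ℓ hG hpsd _hm heq
    refine ⟨lambdaMat_posSemidef G hG hpsd, ?_⟩
    have h := congrArg lambdaMat heq
    rw [lambdaMat_sub, lambdaMat_smul, lambdaMat_add, lambdaMat_add,
      lambdaMat_sum, lambdaMat_sum] at h
    simp_rw [lambdaMat_smul] at h
    exact h
  have part3 : ∀ (X : Matrix (Fin 4 × Fin (n + 1)) (Fin 4 × Fin (n + 1)) ℝ)
      (a : Fin t → ℝ) (b : Fin s → ℝ),
      X.PosSemidef →
      (∀ i, 0 ≤ a i) →
      lambdaMat Q - lam • lambdaMat E =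
        X + ∑ i, a i • lambdaMat (D i) + ∑ j, b j • lambdaMat (F j) →
      ∃ G : Matrix (Fin (n + 1)) (Fin (n + 1)) (Quaternion ℝ),
        X = lambdaMat G ∧ G = Gᴴ ∧
        (∀ v : Fin (n + 1) → Quaternion ℝ,
          0 ≤ (∑ k, ∑ l, star (v k) * G k l * v l).re) ∧
        Q - lam • E = G + ∑ i, a i • D i + ∑ j, b j • F j := by
    intro X a b hX _ha heq
    set G : Matrix (Fin (n + 1)) (Fin (n + 1)) (Quaternion ℝ) :=
      Q - lam • E - ∑ i, a i • D i - ∑ j, b j • F j with hGdef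
    have hLG : lambdaMat G = X := by
      have h1 : lambdaMat G = lambdaMat Q - lam • lambdaMat E
          - ∑ i, a i • lambdaMat (D i) - ∑ j, b j • lambdaMat (F j) := by
        rw [hGdef, lambdaMat_sub, lambdaMat_sub, lambdaMat_sub, lambdaMat_smul,
          lambdaMat_sum, lambdaMat_sum]
        simp_rw [lambdaMat_smul]
      rw [h1, heq]
      abel
    have hGherm : G = Gᴴ := by
      have hEh := E_herm E hE
      rw [hGdef]
      simp only [Matrix.conjTranspose_sub, Matrix.conjTranspose_sum, smul_conjTranspose']
      rw [← hQ, ← hEh]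
      congr 1
      · congr 1
        exact Finset.sum_congr rfl fun i _ => by rw [← hD i]
      · exact Finset.sum_congr rfl fun j _ => by rw [← hF j]
    refine ⟨G, hLG.symm, hGherm, quatPSD_of_lambda G hX hLG, ?_⟩
    rw [hGdef]
    abel
  refine ⟨⟨?_, ?_⟩, part2, part3⟩
  · rintro ⟨G, m, ℓ, h1, h2, h3, h4⟩
    obtain ⟨hpos, heq⟩ := part2 G m ℓ h1 h2 h3 h4
    exact ⟨lambdaMat G, m, ℓ, hpos, h3, heq⟩
  · rintro ⟨X, a, b, hX, ha, heq⟩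
    obtain ⟨G, _, hG, hpsd, heq'⟩ := part3 X a b hX ha heq
    exact ⟨G, a, b, hG, hpsd, ha, heq'⟩
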